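/- For the k-dimensional minimum copula M(u) = min{u₁,…,u_k}, the cumulative copula entropy equals ζ(M) = k·∑_{x=0}^{k-1} C(k-1,x)·(-1)^x/(x+2)², where C(k-1,x) is a binomial coefficient. Equivalently, -∫_0^1 u·ln(u)·k(1-u)^{k-1} du = k·∑_{x=0}^{k-1} C(k-1,x)(-1)^x/(x+2)². -/

import Mathlib

open MeasureTheory Real
open Set in

lemma pow_mul_log_int (m : ℕ) :
    ∫ x in (0:ℝ)..1, x ^ m * (x * Real.log x) = -(1 / ((m:ℝ) + 2) ^ 2) := by
  have hc : (0:ℝ) < (m:ℝ) + 2 := by positivity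
  set c : ℝ := (m:ℝ) + 2 with hcdef
  have key := intervalIntegral.integral_eq_sub_of_hasDeriv_right_of_le
    (f := fun x => x ^ (m+1) * (x * Real.log x) / c - x ^ (m+2) / c ^ 2)
    (f' := fun x => x ^ m * (x * Real.log x)) zero_le_one
    (by fun_prop) ?_ (Continuous.intervalIntegrable (by fun_prop) _ _)
  · rw [key]; norm_num
  · intro x hx
    have hx0 : x ≠ 0 := ne_of_gt hx.1
    have h1 : HasDerivAt (fun x : ℝ => x ^ (m+2)) (((m:ℝ)+2) * x ^ (m+1)) x := by
      simpa using hasDerivAt_pow (m+2) x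
    have h2 : HasDerivAt Real.log x⁻¹ x := Real.hasDerivAt_log hx0
    have h3 : HasDerivAt (fun x : ℝ => x ^ (m+2) * Real.log x)
        (((m:ℝ)+2) * x ^ (m+1) * Real.log x + x ^ (m+2) * x⁻¹) x := h1.mul h2
    have h4 : HasDerivAt (fun x : ℝ => x ^ (m+2) * Real.log x / c - x ^ (m+2) / c ^ 2)
        ((((m:ℝ)+2) * x ^ (m+1) * Real.log x + x ^ (m+2) * x⁻¹) / c
          - ((m:ℝ)+2) * x ^ (m+1) / c ^ 2) x := (h3.div_const c).sub (h1.div_const (c^2))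
    have heq : (fun x : ℝ => x ^ (m+2) * Real.log x / c - x ^ (m+2) / c ^ 2)
        = fun x : ℝ => x ^ (m+1) * (x * Real.log x) / c - x ^ (m+2) / c ^ 2 := by
      funext y; ring_nf
    rw [heq] at h4
    have : (((m:ℝ)+2) * x ^ (m+1) * Real.log x + x ^ (m+2) * x⁻¹) / c
          - ((m:ℝ)+2) * x ^ (m+1) / c ^ 2 = x ^ m * (x * Real.log x) := by
      rw [hcdef]; field_simp; ring
    rw [this] at h4
    exact h4.hasDerivWithinAt

lemma ftc_density (k : ℕ) (s : ℝ) :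
    ∫ x in (0:ℝ)..s, (k:ℝ) * (1-x) ^ (k-1) = 1 - (1-s) ^ k := by
  rcases Nat.eq_zero_or_pos k with rfl | hk
  · simp
  have key := intervalIntegral.integral_eq_sub_of_hasDerivAt
    (f := fun x : ℝ => -(1-x) ^ k) (f' := fun x : ℝ => (k:ℝ) * (1-x) ^ (k-1))
    (a := 0) (b := s) ?_ (Continuous.intervalIntegrable (by fun_prop) _ _)
  · rw [key]; ring
  · intro x _
    have h1 : HasDerivAt (fun x : ℝ => 1 - x) (-1) x := by
      simpa using (hasDerivAt_id x).const_sub 1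
    have h2 := (h1.pow k).neg
    convert h2 using 1
    · rfl
    have : k - 1 + 1 = k := Nat.sub_add_cancel hk
    ring_nf

lemma key1d (k : ℕ) (hk : 1 ≤ k) :
    ∫ u in Set.Icc (0:ℝ) 1, u * Real.log u * ((k:ℝ) * (1-u) ^ (k-1))
      = -((k : ℝ) * ∑ x ∈ Finset.range k,
          ((k - 1).choose x : ℝ) * (-1) ^ x / ((x : ℝ) + 2) ^ 2) := by
  rw [MeasureTheory.integral_Icc_eq_integral_Ioc,
    ← intervalIntegral.integral_of_le zero_le_one]
  have hexp : ∀ u : ℝ, u * Real.log u * ((k:ℝ) * (1-u) ^ (k-1))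
      = ∑ x ∈ Finset.range k,
          ((k:ℝ) * ((k-1).choose x : ℝ) * (-1) ^ x) * (u ^ x * (u * Real.log u)) := by
    intro u
    have hb : (1 - u) ^ (k-1) = ∑ x ∈ Finset.range k, ((k-1).choose x : ℝ) * (-1) ^ x * u ^ x := by
      have := add_pow (-u) 1 (k-1)
      simp only [one_pow, mul_one] at this
      rw [show (1:ℝ) - u = -u + 1 by ring, this, Nat.sub_add_cancel hk]
      refine Finset.sum_congr rfl fun x _ => ?_
      rw [neg_pow]; ring
    rw [hb, Finset.mul_sum, Finset.mul_sum]
    refine Finset.sum_congr rfl fun x _ => by ring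
  simp_rw [hexp]
  rw [intervalIntegral.integral_finset_sum (fun x _ =>
    (Continuous.intervalIntegrable (by fun_prop) _ _))]
  simp_rw [intervalIntegral.integral_const_mul, pow_mul_log_int]
  rw [Finset.mul_sum, ← Finset.sum_neg_distrib]
  refine Finset.sum_congr rfl fun x _ => ?_
  have : ((x:ℝ) + 2) ^ 2 ≠ 0 := by positivity
  field_simp

open Set in
lemma map_min_eq (k : ℕ) (hk : 1 ≤ k) :
    Measure.map (fun u : Fin k → ℝ => ⨅ i, u i)
        (volume.restrict (Set.Icc (0 : Fin k → ℝ) 1))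
      = (volume.restrict (Set.Icc (0:ℝ) 1)).withDensity
          (fun t => ENNReal.ofReal ((k:ℝ) * (1-t) ^ (k-1))) := by
  haveI : Nonempty (Fin k) := ⟨⟨0, hk⟩⟩
  have hmin : Measurable (fun u : Fin k → ℝ => ⨅ i, u i) :=
    Measurable.iInf fun i => measurable_pi_apply i
  have hcube : volume (Set.Icc (0 : Fin k → ℝ) 1) = 1 := by
    rw [Real.volume_Icc_pi]; simp
  haveI : IsFiniteMeasure (volume.restrict (Set.Icc (0 : Fin k → ℝ) 1)) :=
    ⟨by rw [Measure.restrict_apply_univ, hcube]; exact ENNReal.one_lt_top⟩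
  refine Measure.ext_of_Iic _ _ fun a => ?_
  rw [Measure.map_apply hmin measurableSet_Iic,
    Measure.restrict_apply (hmin measurableSet_Iic),
    withDensity_apply _ measurableSet_Iic, Measure.restrict_restrict measurableSet_Iic]
  rcases lt_or_ge a 0 with ha | ha
  · have h1 : (fun u : Fin k → ℝ => ⨅ i, u i) ⁻¹' Iic a ∩ Icc 0 1 = ∅ := by
      apply Set.eq_empty_of_forall_notMem
      rintro u ⟨h, hu⟩
      rw [mem_preimage, mem_Iic] at h
      have h0 : (0:ℝ) ≤ ⨅ i, u i := le_ciInf fun i => by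
        have := hu.1; exact this i
      linarith
    have h2 : Iic a ∩ Icc (0:ℝ) 1 = ∅ := by
      apply Set.eq_empty_of_forall_notMem
      rintro x ⟨h, hx⟩
      rw [mem_Iic] at h
      linarith [hx.1]
    rw [h1, h2]; simp
  · -- a ≥ 0
    have hS : (fun u : Fin k → ℝ => ⨅ i, u i) ⁻¹' Ioi a ∩ Icc 0 1
        = Set.pi Set.univ (fun _ : Fin k => Ioc a 1) := by
      ext u
      simp only [mem_inter_iff, mem_preimage, mem_Ioi, Set.mem_Icc, Set.mem_pi, mem_univ,
        forall_true_left, mem_Ioc, Pi.le_def]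
      constructor
      · rintro ⟨hlt, h0, h1⟩ i
        exact ⟨lt_of_lt_of_le hlt (ciInf_le (Set.finite_range u).bddBelow i), by simpa using h1 i⟩
      · intro h
        obtain ⟨i0, _, hi0⟩ := Finset.exists_min_image Finset.univ u ⟨_, Finset.mem_univ (Classical.arbitrary (Fin k))⟩
        have hinf : (⨅ i, u i) = u i0 :=
          le_antisymm (ciInf_le (Set.finite_range u).bddBelow i0)
            (le_ciInf fun i => hi0 i (Finset.mem_univ i))
        refine ⟨by rw [hinf]; exact (h i0).1, fun i => ?_, fun i => by simpa using (h i).2⟩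
        simpa using le_of_lt (lt_of_le_of_lt ha (h i).1)
    have hSvol : volume (Set.pi Set.univ (fun _ : Fin k => Ioc a 1))
        = (ENNReal.ofReal (1 - a)) ^ k := by
      rw [volume_pi_pi]
      simp [Real.volume_Ioc, Finset.prod_const]
    have hdiff : Icc (0 : Fin k → ℝ) 1 \ ((fun u : Fin k → ℝ => ⨅ i, u i) ⁻¹' Ioi a ∩ Icc 0 1)
        = (fun u : Fin k → ℝ => ⨅ i, u i) ⁻¹' Iic a ∩ Icc 0 1 := by
      ext u
      simp only [mem_diff, mem_inter_iff, mem_preimage, mem_Ioi, mem_Iic, not_and, not_lt]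
      constructor
      · rintro ⟨hu, h⟩
        exact ⟨by by_contra hc; exact absurd hu (by simpa using h (not_le.1 hc)), hu⟩
      · rintro ⟨hle, hu⟩
        exact ⟨hu, fun hlt _ => absurd hle (not_le.2 hlt)⟩
    have hSsub : (fun u : Fin k → ℝ => ⨅ i, u i) ⁻¹' Ioi a ∩ Icc 0 1 ⊆ Icc (0 : Fin k → ℝ) 1 :=
      inter_subset_right
    have hSm : MeasurableSet ((fun u : Fin k → ℝ => ⨅ i, u i) ⁻¹' Ioi a ∩ Icc 0 1) :=
      (hmin measurableSet_Ioi).inter measurableSet_Icc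
    have hfin : volume ((fun u : Fin k → ℝ => ⨅ i, u i) ⁻¹' Ioi a ∩ Icc 0 1) ≠ ⊤ := by
      rw [hS, hSvol]
      refine ne_of_lt (lt_of_le_of_lt ?_ ENNReal.one_lt_top)
      calc (ENNReal.ofReal (1-a))^k ≤ 1^k := by
            gcongr
            exact ENNReal.ofReal_le_one.2 (by linarith)
        _ = 1 := one_pow k
    have hLHS : volume ((fun u : Fin k → ℝ => ⨅ i, u i) ⁻¹' Iic a ∩ Icc 0 1)
        = 1 - (ENNReal.ofReal (1 - a)) ^ k := by
      rw [← hdiff, measure_diff hSsub hSm.nullMeasurableSet hfin, hcube, hS, hSvol]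
    rw [hLHS]
    -- RHS
    have hIic : Iic a ∩ Icc (0:ℝ) 1 = Icc 0 (min a 1) := by
      ext x
      simp only [mem_inter_iff, mem_Iic, mem_Icc, le_min_iff]
      constructor
      · rintro ⟨h1, h2, h3⟩; exact ⟨h2, h1, h3⟩
      · rintro ⟨h1, h2, h3⟩; exact ⟨h2, h1, h3⟩
    rw [hIic]
    have hnn : ∀ x ∈ Icc (0:ℝ) (min a 1), 0 ≤ (k:ℝ) * (1-x) ^ (k-1) := by
      intro x hx
      have h1x : (0:ℝ) ≤ 1 - x := by
        have : x ≤ 1 := le_trans hx.2 (min_le_right a 1); linarith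
      positivity
    have hint : IntegrableOn (fun x => (k:ℝ) * (1-x) ^ (k-1)) (Icc 0 (min a 1)) volume :=
      (Continuous.integrableOn_Icc (by fun_prop))
    rw [← MeasureTheory.ofReal_integral_eq_lintegral_ofReal hint
      ((ae_restrict_iff' measurableSet_Icc).2 (Filter.Eventually.of_forall hnn))]
    have h0m : (0:ℝ) ≤ min a 1 := le_min ha zero_le_one
    have hval : ∫ x in Icc (0:ℝ) (min a 1), (k:ℝ) * (1-x) ^ (k-1)
        = 1 - (1 - min a 1) ^ k := by
      rw [MeasureTheory.integral_Icc_eq_integral_Ioc,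
        ← intervalIntegral.integral_of_le h0m, ftc_density k]
    rw [hval]
    rcases le_or_gt a 1 with h1 | h1
    · rw [min_eq_left h1]
      rw [← ENNReal.ofReal_pow (by linarith), ← ENNReal.ofReal_one,
        ← ENNReal.ofReal_sub _ (pow_nonneg (by linarith) k)]
    · rw [min_eq_right h1.le]
      have h0 : ENNReal.ofReal (1 - a) = 0 := ENNReal.ofReal_eq_zero.2 (by linarith)
      rw [h0, zero_pow (show k ≠ 0 by omega)]
      simp [zero_pow (show k ≠ 0 by omega)]

open Set in
lemma cube_to_1d (k : ℕ) (hk : 1 ≤ k) :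
    ∫ u in Set.Icc (0 : Fin k → ℝ) 1, (⨅ i, u i) * Real.log (⨅ i, u i)
      = ∫ u in Set.Icc (0:ℝ) 1, u * Real.log u * ((k:ℝ) * (1-u) ^ (k-1)) := by
  haveI : Nonempty (Fin k) := ⟨⟨0, hk⟩⟩
  have hmin : Measurable (fun u : Fin k → ℝ => ⨅ i, u i) :=
    Measurable.iInf fun i => measurable_pi_apply i
  have h1 : ∫ u in Set.Icc (0 : Fin k → ℝ) 1, (⨅ i, u i) * Real.log (⨅ i, u i)
      = ∫ t, t * Real.log t
          ∂((volume.restrict (Set.Icc (0:ℝ) 1)).withDensity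
            (fun t => ENNReal.ofReal ((k:ℝ) * (1-t) ^ (k-1)))) := by
    rw [← map_min_eq k hk,
      MeasureTheory.integral_map hmin.aemeasurable
        (Real.continuous_mul_log.aestronglyMeasurable)]
  rw [h1]
  have h2 : (fun t : ℝ => ENNReal.ofReal ((k:ℝ) * (1-t) ^ (k-1)))
      = fun t : ℝ => (((k:ℝ) * (1-t) ^ (k-1)).toNNReal : ENNReal) := rfl
  rw [h2, integral_withDensity_eq_integral_smul (by fun_prop) _]
  refine MeasureTheory.setIntegral_congr_fun measurableSet_Icc fun t ht => ?_
  have h1t : (0:ℝ) ≤ 1 - t := by linarith [ht.2]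
  have hnn : (0:ℝ) ≤ (k:ℝ) * (1-t) ^ (k-1) := by positivity
  simp only [NNReal.smul_def, Real.coe_toNNReal _ hnn, smul_eq_mul]
  ring


/-- CCE of the k-dimensional minimum copula:
both the cube integral and its one-dimensional reduction equal
k ∑_{x=0}^{k-1} C(k-1,x) (-1)^x/(x+2)². -/
theorem stmt3 (k : ℕ) (hk : 1 ≤ k) :
    (-∫ u in Set.Icc (0 : Fin k → ℝ) 1,
        (⨅ i, u i) * Real.log (⨅ i, u i)
      = (k : ℝ) * ∑ x ∈ Finset.range k,
          ((k - 1).choose x : ℝ) * (-1) ^ x / ((x : ℝ) + 2) ^ 2) ∧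
    (-∫ u in Set.Icc (0 : ℝ) 1,
        u * Real.log u * ((k : ℝ) * (1 - u) ^ (k - 1))
      = (k : ℝ) * ∑ x ∈ Finset.range k,
          ((k - 1).choose x : ℝ) * (-1) ^ x / ((x : ℝ) + 2) ^ 2) := by
  constructor
  · rw [cube_to_1d k hk, key1d k hk]; ring
  · rw [key1d k hk]; ring
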